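/- For all integers i ≥ 0 and n > i + g, one has t_{i,n}(x) = 0; that is, (2y + 𝗊(x))^{2n−1} · D₁ⁿ(xⁱy) = n! · s_{i,n}(x) lies in Λ[x]. -/

import Mathlib

open Polynomial

noncomputable section

/-- The index set for the 3g+2 variables pᵢ (i ≤ 2g) and qᵢ (i ≤ g). -/
abbrev HypVars (g : ℕ) := Fin (2*g+1) ⊕ Fin (g+1)

/-- Λ = ℤ[p₀,…,p_{2g},q₀,…,q_g]. -/
abbrev Lam (g : ℕ) := MvPolynomial (HypVars g) ℤ

/-- 𝗉(x) = x^{2g+1} + p_{2g}x^{2g} + ⋯ + p₀ ∈ Λ[x]. -/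
def pUniv (g : ℕ) : Polynomial (Lam g) :=
  X ^ (2*g+1) + ∑ i : Fin (2*g+1), C (MvPolynomial.X (Sum.inl i)) * X ^ (i : ℕ)

/-- 𝗊(x) = q_gx^g + ⋯ + q₀ ∈ Λ[x]. -/
def qUniv (g : ℕ) : Polynomial (Lam g) :=
  ∑ i : Fin (g+1), C (MvPolynomial.X (Sum.inr i)) * X ^ (i : ℕ)

/-- F(x) = 𝗊(x)² + 4𝗉(x). -/
def FUniv (g : ℕ) : Polynomial (Lam g) := qUniv g ^ 2 + 4 * pUniv g

/-- μ = ⌊(N−2g−1)/2⌋. -/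
def muN (g N : ℕ) : ℕ := (N - (2*g+1)) / 2

/-- ν = ⌊N/2⌋ + 1. -/
def nuN (N : ℕ) : ℕ := N / 2 + 1

/-- C_{m,n} = ∏_{r=0}^{n−1} (m − 2r). -/
def Cc (m : ℤ) (n : ℕ) : ℤ := ∏ r ∈ Finset.range n, (m - 2*(r : ℤ))

/-- `IsUnivST g s t` says that `s i n`, `t i n` (for `n ≥ 1`) are the unique polynomials
`s_{i,n}(x), t_{i,n}(x) ∈ Λ[x]` with
`(2y + 𝗊(x))^{2n−1} · D₁ⁿ(xⁱy) = n!(s_{i,n}(x) + t_{i,n}(x)y)` in the fraction field `L` of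
`Λ[x][y]/(y² + 𝗊(x)y − 𝗉(x))`, where `D₁` is the derivation with `D₁x = 1` vanishing on `Λ`.
This is phrased by quantifying over every realization of that fraction field together with
its canonical derivation. -/
def IsUnivST (g : ℕ) (s t : ℕ → ℕ → Polynomial (Lam g)) : Prop :=
  ∀ (L : Type) [Field L], ∀ (φ : Polynomial (Lam g) →+* L) (y : L) (D : L → L),
    Function.Injective φ →
    y ^ 2 + φ (qUniv g) * y = φ (pUniv g) →
    (∀ u v : Polynomial (Lam g), φ v * y = φ u → v = 0) →
    (∀ a b : L, D (a + b) = D a + D b) →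
    (∀ a b : L, D (a * b) = a * D b + D a * b) →
    D (φ X) = 1 →
    (∀ c : Lam g, D (φ (C c)) = 0) →
    ∀ i n : ℕ, 1 ≤ n →
      (2 * y + φ (qUniv g)) ^ (2 * n - 1) * D^[n] (φ X ^ i * y)
        = (n.factorial : L) * (φ (s i n) + φ (t i n) * y)

/-- σ : Λ[x] → k[x], sending pᵢ, qᵢ to the corresponding coefficients of P, Q. -/
def sigmaPQ (g : ℕ) {k : Type} [CommRing k] (P Q : Polynomial k) :
    Polynomial (Lam g) →+* Polynomial k :=
  Polynomial.mapRingHom (MvPolynomial.eval₂Hom (Int.castRingHom k)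
    (Sum.elim (fun i : Fin (2*g+1) => P.coeff i) (fun i : Fin (g+1) => Q.coeff i)))

/-- `(x₀,y₀)` is an N-division point of `(P,Q)`: there are Φ, Ψ ∈ k[x], Ψ ≠ 0,
deg Ψ ≤ μ, deg Φ ≤ ν−1, and a branch η of the curve at x₀ with constant term y₀, such that
Φ(x₀+T) + Ψ(x₀+T)η ≡ 0 mod T^N. -/
def IsDivisionPoint (g : ℕ) {k : Type} [Field k] (P Q : Polynomial k) (N : ℕ)
    (x₀ y₀ : k) : Prop :=
  ∃ (Φ Ψ : Polynomial k) (η : PowerSeries k),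
    Ψ ≠ 0 ∧ Ψ.natDegree ≤ muN g N ∧ Φ.degree ≤ ((nuN N - 1 : ℕ) : WithBot ℕ) ∧
    (PowerSeries.constantCoeff : PowerSeries k →+* k) η = y₀ ∧
    η ^ 2 + ((Q.comp (C x₀ + X) : Polynomial k) : PowerSeries k) * η
      = ((P.comp (C x₀ + X) : Polynomial k) : PowerSeries k) ∧
    (PowerSeries.X : PowerSeries k) ^ N ∣
      (((Φ.comp (C x₀ + X) : Polynomial k) : PowerSeries k)
        + ((Ψ.comp (C x₀ + X) : Polynomial k) : PowerSeries k) * η)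


set_option maxHeartbeats 1000000
set_option synthInstance.maxHeartbeats 400000

namespace Stmt14Aux

variable (g : ℕ)

lemma natDegree_qUniv : (qUniv g).natDegree ≤ g := by
  apply natDegree_sum_le_of_forall_le
  intro i _
  exact (natDegree_C_mul_X_pow_le _ _).trans (Nat.le_of_lt_succ i.isLt)

lemma natDegree_pUniv : (pUniv g).natDegree ≤ 2*g+1 := by
  apply (natDegree_add_le _ _).trans
  simp only [max_le_iff, natDegree_X_pow, le_refl, true_and]
  apply natDegree_sum_le_of_forall_le
  intro i _
  exact (natDegree_C_mul_X_pow_le _ _).trans i.isLt.le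

lemma coeff_FUniv_top : (FUniv g).coeff (2*g+1) = 4 := by
  have h1 : (qUniv g ^ 2).coeff (2*g+1) = 0 := by
    apply coeff_eq_zero_of_natDegree_lt
    have := natDegree_qUniv g
    calc (qUniv g ^ 2).natDegree = 2 * (qUniv g).natDegree := natDegree_pow _ _
    _ < 2*g+1 := by omega
  have h2 : (pUniv g).coeff (2*g+1) = 1 := by
    rw [pUniv, coeff_add, coeff_X_pow, if_pos rfl]
    rw [finset_sum_coeff]
    rw [Finset.sum_eq_zero, add_zero]
    intro i _
    rw [coeff_C_mul, coeff_X_pow, if_neg (by omega), mul_zero]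
  rw [FUniv, coeff_add, h1, zero_add, coeff_ofNat_mul, h2, mul_one]

lemma FUniv_ne_zero : FUniv g ≠ 0 := fun h => by
  have := coeff_FUniv_top g
  rw [h, coeff_zero] at this
  exact absurd this.symm (by norm_num)

lemma natDegree_FUniv : (FUniv g).natDegree = 2*g+1 := by
  apply le_antisymm
  · rw [FUniv]
    apply (natDegree_add_le _ _).trans
    simp only [max_le_iff]
    constructor
    · rw [natDegree_pow]
      have := natDegree_qUniv g; omega
    · apply (natDegree_mul_le).trans
      have := natDegree_pUniv g
      simp only [natDegree_ofNat, zero_add]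
      omega
  · apply le_natDegree_of_ne_zero
    rw [coeff_FUniv_top]
    norm_num

abbrev Kk : Type := FractionRing (Polynomial (Lam g))

def ρ : Polynomial (Lam g) →+* Kk g := algebraMap _ _

lemma ρ_inj : Function.Injective (ρ g) := IsFractionRing.injective _ _

instance : CharZero (Kk g) :=
  charZero_of_injective_algebraMap (IsFractionRing.injective (Polynomial (Lam g)) (Kk g))

lemma not_sq (b : Kk g) : b ^ 2 ≠ ρ g (FUniv g) := by
  intro hb
  have hs := IsLocalization.sec_spec (nonZeroDivisors (Polynomial (Lam g))) b
  set a := (IsLocalization.sec (nonZeroDivisors (Polynomial (Lam g))) b).1 with ha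
  set s := ((IsLocalization.sec (nonZeroDivisors (Polynomial (Lam g))) b).2 : Polynomial (Lam g)) with hsd
  have hs0 : s ≠ 0 := nonZeroDivisors.ne_zero (IsLocalization.sec (nonZeroDivisors (Polynomial (Lam g))) b).2.2
  have key : a ^ 2 = FUniv g * s ^ 2 := by
    apply ρ_inj g
    have : ρ g a = b * ρ g s := hs.symm
    rw [map_mul, map_pow, map_pow, this, mul_pow, hb]; all_goals ring
  have ha0 : a ≠ 0 := by
    intro h
    rw [h] at key
    exact (mul_ne_zero (FUniv_ne_zero g) (pow_ne_zero 2 hs0)) (by simpa [h] using key.symm)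
  have hd := congrArg natDegree key
  rw [natDegree_pow, natDegree_mul (FUniv_ne_zero g) (pow_ne_zero 2 hs0), natDegree_pow,
    natDegree_FUniv] at hd
  omega

def fpol : Polynomial (Kk g) := X ^ 2 - C (ρ g (FUniv g))

lemma fpol_monic : (fpol g).Monic := monic_X_pow_sub_C _ two_ne_zero

lemma fpol_irred : Irreducible (fpol g) :=
  X_pow_sub_C_irreducible_of_prime Nat.prime_two (fun b => not_sq g b)

instance : Fact (Irreducible (fpol g)) := ⟨fpol_irred g⟩

abbrev Ll : Type := AdjoinRoot (fpol g)

def AA : Kk g →+* Ll g := algebraMap _ _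

def ww : Ll g := AdjoinRoot.root (fpol g)

lemma hww : ww g * ww g = AA g (ρ g (FUniv g)) := by
  have h : AdjoinRoot.mk (fpol g) (X ^ 2 - C (ρ g (FUniv g))) = 0 := AdjoinRoot.mk_self
  simp only [map_sub, map_pow, AdjoinRoot.mk_X, AdjoinRoot.mk_C, sub_eq_zero] at h
  rw [ww, ← pow_two, h, AA, AdjoinRoot.algebraMap_eq]

def mkL (u v : Kk g) : Ll g := AA g u + AA g v * ww g

lemma mkL_eq_mk (u v : Kk g) :
    mkL g u v = AdjoinRoot.mk (fpol g) (C v * X + C u) := by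
  rw [mkL, map_add, map_mul, AdjoinRoot.mk_X, AdjoinRoot.mk_C, AdjoinRoot.mk_C]
  rw [AA, AdjoinRoot.algebraMap_eq, add_comm, ww]

def coA (z : Ll g) : Kk g := (AdjoinRoot.modByMonicHom (fpol_monic g) z).coeff 0
def coB (z : Ll g) : Kk g := (AdjoinRoot.modByMonicHom (fpol_monic g) z).coeff 1

lemma degree_fpol : (fpol g).degree = 2 := by
  rw [fpol]; exact degree_X_pow_sub_C (by norm_num) _

lemma degree_lin_lt (u v : Kk g) : (C v * X + C u).degree < (fpol g).degree := by
  rw [degree_fpol]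
  exact lt_of_le_of_lt degree_linear_le (by norm_num)

lemma coA_mkL (u v : Kk g) : coA g (mkL g u v) = u := by
  rw [coA, mkL_eq_mk, AdjoinRoot.modByMonicHom_mk,
    (modByMonic_eq_self_iff (fpol_monic g)).mpr (degree_lin_lt g u v)]
  simp [coeff_C]

lemma coB_mkL (u v : Kk g) : coB g (mkL g u v) = v := by
  rw [coB, mkL_eq_mk, AdjoinRoot.modByMonicHom_mk,
    (modByMonic_eq_self_iff (fpol_monic g)).mpr (degree_lin_lt g u v)]
  simp [coeff_C]

lemma mkL_coords (z : Ll g) : mkL g (coA g z) (coB g z) = z := by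
  obtain ⟨P, rfl⟩ := AdjoinRoot.mk_surjective z
  rw [coA, coB, AdjoinRoot.modByMonicHom_mk]
  have hdeg : (P %ₘ fpol g).degree ≤ 1 := by
    have h := degree_modByMonic_lt P (fpol_monic g)
    rw [degree_fpol] at h
    exact Order.le_of_lt_succ (by exact_mod_cast h)
  rw [mkL_eq_mk]
  conv_rhs => rw [← AdjoinRoot.mk_leftInverse (fpol_monic g) (AdjoinRoot.mk (fpol g) P)]
  rw [AdjoinRoot.modByMonicHom_mk]
  congr 1
  exact (eq_X_add_C_of_degree_le_one hdeg).symm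

lemma mkL_injEq {u v u' v' : Kk g} (h : mkL g u v = mkL g u' v') : u = u' ∧ v = v' := by
  constructor
  · rw [← coA_mkL g u v, h, coA_mkL]
  · rw [← coB_mkL g u v, h, coB_mkL]

lemma mkL_add (u v u' v' : Kk g) :
    mkL g u v + mkL g u' v' = mkL g (u + u') (v + v') := by
  simp only [mkL, map_add]; ring

lemma mkL_mul (u v u' v' : Kk g) :
    mkL g u v * mkL g u' v' = mkL g (u * u' + v * v' * ρ g (FUniv g)) (u * v' + u' * v) := by
  simp only [mkL, map_add, map_mul]
  have h := hww g
  linear_combination (AA g v * AA g v') * h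

lemma coA_add (z₁ z₂ : Ll g) : coA g (z₁ + z₂) = coA g z₁ + coA g z₂ := by
  rw [coA, coA, coA, map_add, coeff_add]

lemma coB_add (z₁ z₂ : Ll g) : coB g (z₁ + z₂) = coB g z₁ + coB g z₂ := by
  rw [coB, coB, coB, map_add, coeff_add]

abbrev M : Submonoid (Polynomial (Lam g)) := nonZeroDivisors (Polynomial (Lam g))

/-- Derivation on the fraction field of Λ[x] extending d/dx. -/
def dK (z : Kk g) : Kk g :=
  (ρ g (derivative (IsLocalization.sec (M g) z).1) * ρ g ((IsLocalization.sec (M g) z).2 : Polynomial (Lam g))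
    - ρ g (IsLocalization.sec (M g) z).1 * ρ g (derivative ((IsLocalization.sec (M g) z).2 : Polynomial (Lam g))))
    / ρ g ((IsLocalization.sec (M g) z).2 : Polynomial (Lam g)) ^ 2

lemma ρ_ne_zero {r : Polynomial (Lam g)} (h : r ≠ 0) : ρ g r ≠ 0 := fun h0 =>
  h (ρ_inj g (by rw [h0, map_zero]))

lemma dK_master (z : Kk g) (a s : Polynomial (Lam g)) (hs : s ≠ 0)
    (hz : z * ρ g s = ρ g a) :
    dK g z = (ρ g (derivative a) * ρ g s - ρ g a * ρ g (derivative s)) / ρ g s ^ 2 := by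
  have hspec := IsLocalization.sec_spec (M g) z
  rw [show (algebraMap (Polynomial (Lam g)) (Kk g)) = ρ g from rfl] at hspec
  set b := (IsLocalization.sec (M g) z).1 with hb
  set t := ((IsLocalization.sec (M g) z).2 : Polynomial (Lam g)) with ht
  have ht0 : t ≠ 0 := nonZeroDivisors.ne_zero (IsLocalization.sec (M g) z).2.2
  have h1 : a * t = b * s := by
    apply ρ_inj g
    rw [map_mul, map_mul, ← hz, ← hspec]; ring
  have h2 : derivative a * t + a * derivative t = derivative b * s + b * derivative s := by
    have := congrArg derivative h1
    simpa [derivative_mul] using this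
  have hR : (derivative b * t - b * derivative t) * s ^ 2
      = (derivative a * s - a * derivative s) * t ^ 2 := by
    linear_combination (derivative s * t + s * derivative t) * h1 - (s * t) * h2
  rw [dK]
  rw [div_eq_div_iff (pow_ne_zero 2 (ρ_ne_zero g ht0)) (pow_ne_zero 2 (ρ_ne_zero g hs))]
  have := congrArg (ρ g) hR
  simpa only [map_mul, map_sub, map_pow, map_add] using this

lemma dK_ρ (r : Polynomial (Lam g)) : dK g (ρ g r) = ρ g (derivative r) := by
  rw [dK_master g _ r 1 one_ne_zero (by rw [map_one, mul_one])]
  simp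

lemma dK_zero : dK g 0 = 0 := by
  have := dK_ρ g 0
  simpa using this

lemma dK_add (z₁ z₂ : Kk g) : dK g (z₁ + z₂) = dK g z₁ + dK g z₂ := by
  have h₁ := IsLocalization.sec_spec (M g) z₁
  have h₂ := IsLocalization.sec_spec (M g) z₂
  rw [show (algebraMap (Polynomial (Lam g)) (Kk g)) = ρ g from rfl] at h₁ h₂
  set a₁ := (IsLocalization.sec (M g) z₁).1
  set s₁ := ((IsLocalization.sec (M g) z₁).2 : Polynomial (Lam g))
  set a₂ := (IsLocalization.sec (M g) z₂).1
  set s₂ := ((IsLocalization.sec (M g) z₂).2 : Polynomial (Lam g))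
  have hs₁ : s₁ ≠ 0 := nonZeroDivisors.ne_zero (IsLocalization.sec (M g) z₁).2.2
  have hs₂ : s₂ ≠ 0 := nonZeroDivisors.ne_zero (IsLocalization.sec (M g) z₂).2.2
  rw [dK_master g z₁ a₁ s₁ hs₁ h₁, dK_master g z₂ a₂ s₂ hs₂ h₂,
    dK_master g (z₁ + z₂) (a₁ * s₂ + a₂ * s₁) (s₁ * s₂) (mul_ne_zero hs₁ hs₂)
      (by rw [map_mul, map_add, map_mul, map_mul]; rw [add_mul]
          rw [show z₁ * (ρ g s₁ * ρ g s₂) = z₁ * ρ g s₁ * ρ g s₂ by ring, h₁]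
          rw [show z₂ * (ρ g s₁ * ρ g s₂) = z₂ * ρ g s₂ * ρ g s₁ by ring, h₂])]
  have e₁ := ρ_ne_zero g hs₁
  have e₂ := ρ_ne_zero g hs₂
  try simp only [derivative_add, derivative_mul, map_add, map_mul]
  field_simp
  ring

lemma dK_mul (z₁ z₂ : Kk g) : dK g (z₁ * z₂) = z₁ * dK g z₂ + dK g z₁ * z₂ := by
  have h₁ := IsLocalization.sec_spec (M g) z₁
  have h₂ := IsLocalization.sec_spec (M g) z₂
  rw [show (algebraMap (Polynomial (Lam g)) (Kk g)) = ρ g from rfl] at h₁ h₂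
  set a₁ := (IsLocalization.sec (M g) z₁).1
  set s₁ := ((IsLocalization.sec (M g) z₁).2 : Polynomial (Lam g))
  set a₂ := (IsLocalization.sec (M g) z₂).1
  set s₂ := ((IsLocalization.sec (M g) z₂).2 : Polynomial (Lam g))
  have hs₁ : s₁ ≠ 0 := nonZeroDivisors.ne_zero (IsLocalization.sec (M g) z₁).2.2
  have hs₂ : s₂ ≠ 0 := nonZeroDivisors.ne_zero (IsLocalization.sec (M g) z₂).2.2
  have hz₁ : z₁ = ρ g a₁ / ρ g s₁ := by
    rw [eq_div_iff (ρ_ne_zero g hs₁)]; exact h₁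
  have hz₂ : z₂ = ρ g a₂ / ρ g s₂ := by
    rw [eq_div_iff (ρ_ne_zero g hs₂)]; exact h₂
  rw [dK_master g z₁ a₁ s₁ hs₁ h₁, dK_master g z₂ a₂ s₂ hs₂ h₂,
    dK_master g (z₁ * z₂) (a₁ * a₂) (s₁ * s₂) (mul_ne_zero hs₁ hs₂)
      (by rw [map_mul, map_mul]
          rw [show z₁ * z₂ * (ρ g s₁ * ρ g s₂) = z₁ * ρ g s₁ * (z₂ * ρ g s₂) by ring, h₁, h₂]),
    hz₁, hz₂]
  have e₁ := ρ_ne_zero g hs₁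
  have e₂ := ρ_ne_zero g hs₂
  try simp only [derivative_mul, map_add, map_mul]
  field_simp
  ring

def θ : Kk g := ρ g (derivative (FUniv g)) / (2 * ρ g (FUniv g))

lemma hθ : θ g * (2 * ρ g (FUniv g)) = ρ g (derivative (FUniv g)) := by
  rw [θ, div_mul_cancel₀]
  exact mul_ne_zero two_ne_zero (ρ_ne_zero g (FUniv_ne_zero g))

/-- The derivation on L. -/
def DL (z : Ll g) : Ll g :=
  mkL g (dK g (coA g z)) (dK g (coB g z) + coB g z * θ g)

lemma DL_mkL (u v : Kk g) :
    DL g (mkL g u v) = mkL g (dK g u) (dK g v + v * θ g) := by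
  rw [DL, coA_mkL, coB_mkL]

lemma DL_add (z₁ z₂ : Ll g) : DL g (z₁ + z₂) = DL g z₁ + DL g z₂ := by
  rw [DL, DL, DL, coA_add, coB_add, dK_add, dK_add, mkL_add]
  ring_nf

lemma DL_mul (z₁ z₂ : Ll g) : DL g (z₁ * z₂) = z₁ * DL g z₂ + DL g z₁ * z₂ := by
  obtain ⟨a₁, b₁, rfl⟩ : ∃ u v, mkL g u v = z₁ := ⟨_, _, mkL_coords g z₁⟩
  obtain ⟨a₂, b₂, rfl⟩ : ∃ u v, mkL g u v = z₂ := ⟨_, _, mkL_coords g z₂⟩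
  rw [mkL_mul, DL_mkL, DL_mkL, DL_mkL, mkL_mul, mkL_mul, mkL_add]
  have hF0 : ρ g (FUniv g) ≠ 0 := ρ_ne_zero g (FUniv_ne_zero g)
  congr 1
  · rw [dK_add, dK_mul, dK_mul, dK_mul, dK_ρ]
    rw [θ]
    field_simp
    ring
  · rw [dK_add, dK_mul, dK_mul]
    ring

lemma mkL_zero : mkL g 0 0 = 0 := by simp [mkL]

lemma mkL_one : mkL g 1 0 = 1 := by simp [mkL]

lemma AA_eq_mkL (u : Kk g) : AA g u = mkL g u 0 := by simp [mkL]

def φL : Polynomial (Lam g) →+* Ll g := (AA g).comp (ρ g)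

lemma φL_inj : Function.Injective (φL g) :=
  ((AA g).injective).comp (ρ_inj g)

lemma φL_eq (r : Polynomial (Lam g)) : φL g r = mkL g (ρ g r) 0 := by
  rw [φL, RingHom.comp_apply, AA_eq_mkL]

lemma DL_X : DL g (φL g X) = 1 := by
  rw [φL_eq, DL_mkL, dK_zero, dK_ρ, derivative_X, map_one, zero_add, zero_mul, mkL_one]

lemma DL_C (c : Lam g) : DL g (φL g (Polynomial.C c)) = 0 := by
  rw [φL_eq, DL_mkL, dK_zero, dK_ρ, derivative_C, map_zero, zero_add, zero_mul, mkL_zero]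

/-- the canonical point y. -/
def yL : Ll g := mkL g (-(ρ g (qUniv g)) / 2) (1 / 2)

lemma hFk : ρ g (FUniv g) = ρ g (qUniv g) ^ 2 + 4 * ρ g (pUniv g) := by
  rw [FUniv, map_add, map_mul, map_pow, map_ofNat]

lemma yL_quad : yL g ^ 2 + φL g (qUniv g) * yL g = φL g (pUniv g) := by
  rw [yL, pow_two, mkL_mul, φL_eq, φL_eq, mkL_mul, mkL_add]
  congr 1
  · rw [hFk]; field_simp; ring
  · field_simp
    ring

lemma two_yL : 2 * yL g + φL g (qUniv g) = ww g := by
  have h2 : (2 : Ll g) = mkL g 2 0 := by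
    simp [mkL, map_ofNat]
  rw [yL, h2, mkL_mul, φL_eq, mkL_add]
  have : ww g = mkL g 0 1 := by simp [mkL]
  rw [this]
  congr 1 <;> field_simp <;> ring

lemma indep (u v : Polynomial (Lam g)) (h : φL g v * yL g = φL g u) : v = 0 := by
  rw [φL_eq, φL_eq, yL, mkL_mul] at h
  have := (mkL_injEq g h).2
  simp only [mul_zero, add_zero, mul_one] at this
  have hv : ρ g v = 0 := by
    field_simp at this
    simpa using this
  exact ρ_inj g (by rw [hv, map_zero])

lemma dK_one : dK g 1 = 0 := by
  have := dK_ρ g 1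
  simpa using this

lemma dK_two : dK g 2 = 0 := by
  have := dK_ρ g 2
  rw [map_ofNat] at this
  simpa using this

lemma dK_neg (z : Kk g) : dK g (-z) = -dK g z := by
  have h := dK_add g z (-z)
  rw [add_neg_cancel, dK_zero] at h
  exact eq_neg_of_add_eq_zero_right h.symm

lemma dK_inv_two : dK g (2⁻¹ : Kk g) = 0 := by
  have h : (2 : Kk g) * 2⁻¹ = 1 := mul_inv_cancel₀ two_ne_zero
  have h2 := dK_mul g 2 (2⁻¹ : Kk g)
  rw [h, dK_one, dK_two, zero_mul, add_zero] at h2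
  have : (2 : Kk g) ≠ 0 := two_ne_zero
  field_simp at h2
  rw [show (2⁻¹ : Kk g) = 1/2 by rw [one_div]]
  exact (mul_eq_zero.mp h2.symm).resolve_left this

lemma dK_neg_half : dK g (-(1/2) : Kk g) = 0 := by
  rw [one_div, dK_neg, dK_inv_two, neg_zero]

lemma dK_iter_ρ (m : ℕ) (r : Polynomial (Lam g)) :
    (dK g)^[m] (ρ g r) = ρ g ((⇑derivative)^[m] r) := by
  induction m generalizing r with
  | zero => simp
  | succ m ih =>
    rw [Function.iterate_succ_apply, dK_ρ, ih, Function.iterate_succ_apply]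

lemma dK_iter_mul_const (c : Kk g) (hc : dK g c = 0) (m : ℕ) (z : Kk g) :
    (dK g)^[m] (z * c) = (dK g)^[m] z * c := by
  induction m generalizing z with
  | zero => simp
  | succ m ih =>
    rw [Function.iterate_succ_apply, Function.iterate_succ_apply, dK_mul, hc, mul_zero,
      zero_add, ih]

lemma DL_iter_add (m : ℕ) (z₁ z₂ : Ll g) :
    (DL g)^[m] (z₁ + z₂) = (DL g)^[m] z₁ + (DL g)^[m] z₂ := by
  induction m generalizing z₁ z₂ with
  | zero => simp
  | succ m ih =>
    rw [Function.iterate_succ_apply, Function.iterate_succ_apply,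
      Function.iterate_succ_apply, DL_add, ih]

lemma DL_iter_A (m : ℕ) (u : Kk g) :
    (DL g)^[m] (mkL g u 0) = mkL g ((dK g)^[m] u) 0 := by
  induction m generalizing u with
  | zero => simp
  | succ m ih =>
    rw [Function.iterate_succ_apply, DL_mkL, dK_zero, zero_mul, add_zero, ih,
      Function.iterate_succ_apply]

lemma DL_iter_B (m : ℕ) (v : Kk g) :
    ∃ c : Kk g, (DL g)^[m] (mkL g 0 v) = mkL g 0 c := by
  induction m with
  | zero => exact ⟨v, by simp⟩
  | succ m ih =>
    obtain ⟨c, hc⟩ := ih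
    refine ⟨dK g c + c * θ g, ?_⟩
    rw [Function.iterate_succ_apply', hc, DL_mkL, dK_zero]

lemma ww_pow (k : ℕ) : ww g ^ (2*k+1) = mkL g 0 (ρ g (FUniv g) ^ k) := by
  have h2 : ww g ^ (2*k) = AA g (ρ g (FUniv g) ^ k) := by
    rw [pow_mul, pow_two, hww, ← map_pow]
  rw [pow_succ, h2, AA_eq_mkL]
  have hw : ww g = mkL g 0 1 := by simp [mkL]
  rw [hw, mkL_mul]
  congr 1 <;> ring

lemma natDegree_Xi_q (i : ℕ) : (X ^ i * qUniv g).natDegree ≤ i + g := by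
  apply natDegree_mul_le.trans
  have := natDegree_qUniv g
  rw [natDegree_X_pow]
  omega

end Stmt14Aux

open Stmt14Aux in
/-- for n > i+g one has t_{i,n} = 0, i.e.
(2y+𝗊(x))^{2n−1}·D₁ⁿ(xⁱy) = n!·s_{i,n}(x) lies in Λ[x]. -/
theorem stmt14 (g : ℕ) (hg : 1 ≤ g) (s t : ℕ → ℕ → Polynomial (Lam g))
    (hst : IsUnivST g s t) (i n : ℕ) (hn : i + g < n) :
    t i n = 0 := by
  have hn1 : 1 ≤ n := by omega
  have h := hst (Ll g) (φL g) (yL g) (DL g) (φL_inj g) (yL_quad g) (indep g) (DL_add g)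
    (DL_mul g) (DL_X g) (DL_C g) i n hn1
  have hxy : φL g X ^ i * yL g
      = mkL g (ρ g (X ^ i * qUniv g) * (-(1/2) : Kk g)) 0 + mkL g 0 (ρ g (X ^ i) * (1/2)) := by
    rw [← map_pow, φL_eq, yL, mkL_mul, mkL_add]
    congr 1
    · rw [map_mul]; ring
    · ring
  have hdeg : (X ^ i * qUniv g).natDegree < n := lt_of_le_of_lt (natDegree_Xi_q g i) hn
  obtain ⟨c, hc⟩ := DL_iter_B g n (ρ g (X ^ i) * (1/2))
  have hiter : (DL g)^[n] (φL g X ^ i * yL g) = mkL g 0 c := by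
    rw [hxy, DL_iter_add, DL_iter_A, dK_iter_mul_const g _ (dK_neg_half g), dK_iter_ρ,
      iterate_derivative_eq_zero hdeg, map_zero, zero_mul, mkL_zero, zero_add, hc]
  rw [hiter, two_yL, show 2*n - 1 = 2*(n-1)+1 by omega, ww_pow, mkL_mul] at h
  have hcast : (n.factorial : Ll g) = mkL g (n.factorial : Kk g) 0 := by
    rw [← map_natCast (AA g), AA_eq_mkL]
  rw [φL_eq g (s i n), φL_eq g (t i n), yL, mkL_mul, mkL_add, hcast, mkL_mul] at h
  have h2 := (mkL_injEq g h).2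
  have hfac : (n.factorial : Kk g) ≠ 0 := Nat.cast_ne_zero.mpr n.factorial_ne_zero
  have hρt : ρ g (t i n) = 0 := by
    field_simp at h2
    rcases mul_eq_zero.mp (by linear_combination -h2 : (n.factorial : Kk g) * ρ g (t i n) = 0) with h2 | h2
    · exact absurd h2 hfac
    · exact h2
  exact ρ_inj g (by rw [hρt, map_zero])
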